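/- Let K := RatFunc ℝ with indeterminate x := RatFunc.X, let εp, εq, εr be arbitrary real numbers (regarded in K via the constant embedding C), and define B ∈ Matrix (Fin 3) (Fin 3) K by B := !![1, −x⁻¹·C εp, −C εq; −x·C εp, 1, −C εr; −C εq, −C εr, 1], and rᵢ := −1 + 2 • (B · Matrix.stdBasisMatrix i i 1) for i = 0, 1, 2. Then trace (r₁·r₀·r₁·r₂) = C (8·εp·εq·εr) · (x + x⁻¹) + C (16·εp²·εr² + 4·εq² − 1). -/

import Mathlib

/- STATEMENT 15: In K := RatFunc ℝ with x := RatFunc.X and arbitrary reals εp, εq, εr,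
with B := !![1, −x⁻¹·C εp, −C εq; −x·C εp, 1, −C εr; −C εq, −C εr, 1] and
rᵢ := −1 + 2 • (B · stdBasisMatrix i i 1), one has
trace (r₁·r₀·r₁·r₂) = C (8·εp·εq·εr) · (x + x⁻¹) + C (16·εp²·εr² + 4·εq² − 1). -/

set_option maxHeartbeats 1600000
noncomputable section

open RatFunc

/-- The bilinear form matrix B(X) of Example 1.14. -/
def goldmanB (εp εq εr : ℝ) : Matrix (Fin 3) (Fin 3) (RatFunc ℝ) :=
  !![1, -(RatFunc.X)⁻¹ * RatFunc.C εp, -RatFunc.C εq;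
     -RatFunc.X * RatFunc.C εp, 1, -RatFunc.C εr;
     -RatFunc.C εq, -RatFunc.C εr, 1]

/-- The reflections ρ(rᵢ) := −Id + 2 B(X) eᵢ ᵗeᵢ of Example 1.14. -/
def goldmanRefl (εp εq εr : ℝ) (i : Fin 3) : Matrix (Fin 3) (Fin 3) (RatFunc ℝ) :=
  -1 + 2 • (goldmanB εp εq εr * Matrix.single i i 1)

theorem goldman_trace (εp εq εr : ℝ) :
    Matrix.trace
        (goldmanRefl εp εq εr 1 * goldmanRefl εp εq εr 0 *
          goldmanRefl εp εq εr 1 * goldmanRefl εp εq εr 2) =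
      RatFunc.C (8 * εp * εq * εr) * (RatFunc.X + (RatFunc.X)⁻¹) +
        RatFunc.C (16 * εp ^ 2 * εr ^ 2 + 4 * εq ^ 2 - 1) := by
  have hx : (RatFunc.X : RatFunc ℝ) ≠ 0 := RatFunc.X_ne_zero
  set e1 := RatFunc.C εp
  set e2 := RatFunc.C εq
  set e3 := RatFunc.C εr
  have h0 : goldmanRefl εp εq εr 0 =
      !![1, 0, 0; -2 * RatFunc.X * e1, -1, 0; -2 * e2, 0, -1] := by
    unfold goldmanRefl goldmanB
    ext i j
    fin_cases i <;> fin_cases j <;>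
      simp [Matrix.mul_apply, Matrix.single, Fin.sum_univ_succ, Matrix.vecHead, Matrix.vecTail, Fin.ext_iff] <;> ring
  have h1 : goldmanRefl εp εq εr 1 =
      !![-1, -2 * (RatFunc.X)⁻¹ * e1, 0; 0, 1, 0; 0, -2 * e3, -1] := by
    unfold goldmanRefl goldmanB
    ext i j
    fin_cases i <;> fin_cases j <;>
      simp [Matrix.mul_apply, Matrix.single, Fin.sum_univ_succ, Matrix.vecHead, Matrix.vecTail, Fin.ext_iff] <;> ring
  have h2 : goldmanRefl εp εq εr 2 =
      !![-1, 0, -2 * e2; 0, -1, -2 * e3; 0, 0, 1] := by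
    unfold goldmanRefl goldmanB
    ext i j
    fin_cases i <;> fin_cases j <;>
      simp [Matrix.mul_apply, Matrix.single, Fin.sum_univ_succ, Matrix.vecHead, Matrix.vecTail, Fin.ext_iff] <;> ring
  rw [h0, h1, h2, Matrix.mul_fin_three, Matrix.mul_fin_three, Matrix.mul_fin_three,
    Matrix.trace_fin_three_of]
  have hinv : RatFunc.X * (RatFunc.X)⁻¹ = 1 := mul_inv_cancel₀ hx
  simp only [e1, e2, e3, map_mul, map_add, map_sub, map_pow, map_ofNat, map_one]
  field_simp
  ring
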